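/- For every finite simple graph G on vertex set V and every natural number k, the chromatic symmetric polynomial in k variables satisfies X_G^{(k)} = \sum_{F \subseteq E(G)} (-1)^{|F|} \prod_{C} \big(\sum_{i=1}^{k} x_i^{|C|}\big), where F ranges over all subsets of the edge set of G, and for each such F the product ranges over the connected components C of the spanning subgraph of G with vertex set V and edge set F, with |C| denoting the number of vertices in the component C. -/

import Mathlib

open MvPolynomial in
open Classical in
/-- The chromatic symmetric polynomial of a finite simple graph `G` in `k` variables:
the sum over all proper colourings `κ : V → Fin k` of the monomials `∏ v, x_{κ v}`. -/
noncomputable def chromSymPoly {V : Type} [Fintype V] (G : SimpleGraph V) (k : ℕ) :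
    MvPolynomial (Fin k) ℤ :=
  ∑ κ : V → Fin k,
    if ∀ u v : V, G.Adj u v → κ u ≠ κ v then ∏ v : V, (X (κ v) : MvPolynomial (Fin k) ℤ) else 0

/-- Inclusion–exclusion sign sum in any commutative ring. -/
lemma aux_sum_powerset_neg_one {α : Type*} [DecidableEq α] {R : Type*} [CommRing R]
    (x : Finset α) :
    ∑ m ∈ x.powerset, (-1 : R) ^ m.card = if x = ∅ then 1 else 0 := by
  have h := Finset.sum_powerset_neg_one_pow_card (x := x)
  have := congrArg (fun z : ℤ => (z : R)) h
  push_cast at this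
  simpa using this

lemma aux_walk_const {V : Type} {H : SimpleGraph V} {β : Type*} {κ : V → β}
    (hκ : ∀ u v, H.Adj u v → κ u = κ v) {u v : V} (p : H.Walk u v) : κ u = κ v := by
  induction p with
  | nil => rfl
  | cons h p ih => exact (hκ _ _ h).trans ih

open MvPolynomial in
open Classical in
/-- Product over components of power sums equals the sum over colourings constant on
components. -/
lemma aux_prod_components {V : Type} [Fintype V] (H : SimpleGraph V) (k : ℕ) :
    (∏ C : H.ConnectedComponent,
        ∑ i : Fin k, (X i : MvPolynomial (Fin k) ℤ) ^ (Nat.card C.supp)) =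
      ∑ κ : V → Fin k,
        if ∀ u v : V, H.Adj u v → κ u = κ v
        then ∏ v : V, (X (κ v) : MvPolynomial (Fin k) ℤ) else 0 := by
  have hcard : ∀ C : H.ConnectedComponent,
      Nat.card C.supp =
        (Finset.univ.filter (fun v => H.connectedComponentMk v = C)).card := by
    intro C
    rw [Nat.card_coe_set_eq, Set.ncard_eq_toFinset_card' C.supp]
    congr 1
    ext v
    simp [SimpleGraph.ConnectedComponent.mem_supp_iff]
  calc
    (∏ C : H.ConnectedComponent,
        ∑ i : Fin k, (X i : MvPolynomial (Fin k) ℤ) ^ (Nat.card C.supp))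
      = ∏ C : H.ConnectedComponent, ∑ i : Fin k,
          ∏ v ∈ Finset.univ.filter (fun v => H.connectedComponentMk v = C),
            (X i : MvPolynomial (Fin k) ℤ) := by
        refine Finset.prod_congr rfl fun C _ => Finset.sum_congr rfl fun i _ => ?_
        rw [hcard C, Finset.prod_const]
    _ = ∑ g ∈ Fintype.piFinset (fun _ : H.ConnectedComponent => (Finset.univ : Finset (Fin k))),
          ∏ C : H.ConnectedComponent,
            ∏ v ∈ Finset.univ.filter (fun v => H.connectedComponentMk v = C),
              (X (g C) : MvPolynomial (Fin k) ℤ) := Finset.prod_univ_sum _ _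
    _ = ∑ g : H.ConnectedComponent → Fin k,
          ∏ v : V, (X (g (H.connectedComponentMk v)) : MvPolynomial (Fin k) ℤ) := by
        rw [Fintype.piFinset_univ]
        refine Finset.sum_congr rfl fun g _ => ?_
        rw [← Finset.prod_fiberwise Finset.univ (fun v => H.connectedComponentMk v)
          (fun v => (X (g (H.connectedComponentMk v)) : MvPolynomial (Fin k) ℤ))]
        refine Finset.prod_congr rfl fun C _ => Finset.prod_congr rfl fun v hv => ?_
        rw [(Finset.mem_filter.mp hv).2]
    _ = ∑ κ ∈ Finset.univ.filter
            (fun κ : V → Fin k => ∀ u v : V, H.Adj u v → κ u = κ v),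
          ∏ v : V, (X (κ v) : MvPolynomial (Fin k) ℤ) := by
        refine Finset.sum_nbij' (fun g => g ∘ H.connectedComponentMk)
          (fun κ C => κ C.out) ?_ ?_ ?_ ?_ ?_
        · intro g _
          simp only [Finset.mem_filter, Finset.mem_univ, true_and]
          intro u v h
          simp [Function.comp, SimpleGraph.ConnectedComponent.sound h.reachable]
        · intro κ _; exact Finset.mem_univ _
        · intro g _
          funext C
          induction C using SimpleGraph.ConnectedComponent.ind with
          | _ v =>
            exact congrArg g (H.connectedComponentMk v).out_eq
        · intro κ hκ
          simp only [Finset.mem_filter, Finset.mem_univ, true_and] at hκ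
          funext v
          show κ ((H.connectedComponentMk v).out) = κ v
          have : H.Reachable ((H.connectedComponentMk v).out) v :=
            (SimpleGraph.ConnectedComponent.eq.mp (H.connectedComponentMk v).out_eq)
          exact aux_walk_const hκ this.some
        · intro g _; rfl
    _ = ∑ κ : V → Fin k,
          if ∀ u v : V, H.Adj u v → κ u = κ v
          then ∏ v : V, (X (κ v) : MvPolynomial (Fin k) ℤ) else 0 :=
        Finset.sum_filter _ _

open Classical in
theorem chromSymPoly_eq_sum_powerset {V : Type} [Fintype V] (G : SimpleGraph V) (k : ℕ) :
    chromSymPoly G k =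
      ∑ F ∈ G.edgeFinset.powerset,
        (-1 : MvPolynomial (Fin k) ℤ) ^ F.card *
          ∏ C : (SimpleGraph.fromEdgeSet (↑F : Set (Sym2 V))).ConnectedComponent,
            ∑ i : Fin k, (MvPolynomial.X i : MvPolynomial (Fin k) ℤ) ^ (Nat.card C.supp) := by
  classical
  have hR : (∑ F ∈ G.edgeFinset.powerset,
      (-1 : MvPolynomial (Fin k) ℤ) ^ F.card *
        ∏ C : (SimpleGraph.fromEdgeSet (↑F : Set (Sym2 V))).ConnectedComponent,
          ∑ i : Fin k, (MvPolynomial.X i : MvPolynomial (Fin k) ℤ) ^ (Nat.card C.supp)) =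
      ∑ F ∈ G.edgeFinset.powerset, ∑ κ : V → Fin k,
        (-1 : MvPolynomial (Fin k) ℤ) ^ F.card *
          (if ∀ u v : V, (SimpleGraph.fromEdgeSet (↑F : Set (Sym2 V))).Adj u v → κ u = κ v
            then ∏ v : V, (MvPolynomial.X (κ v) : MvPolynomial (Fin k) ℤ) else 0) := by
    refine Finset.sum_congr rfl fun F _ => ?_
    rw [← Finset.mul_sum]
    congr 1
    convert aux_prod_components (SimpleGraph.fromEdgeSet (↑F : Set (Sym2 V))) k
  rw [hR, Finset.sum_comm, chromSymPoly]
  refine Finset.sum_congr rfl fun κ _ => ?_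
  -- the set of monochromatic edges of `κ` inside `G`
  set mono : Sym2 V → Prop :=
    Sym2.lift ⟨fun u v => κ u = κ v, fun u v => propext ⟨Eq.symm, Eq.symm⟩⟩ with hmono
  have hmono_mk : ∀ u v : V, mono s(u, v) ↔ κ u = κ v := by
    intro u v; rw [hmono, Sym2.lift_mk]
  set M : Finset (Sym2 V) := G.edgeFinset.filter mono with hM
  have key : ∀ F ∈ G.edgeFinset.powerset,
      (if ∀ u v : V, (SimpleGraph.fromEdgeSet (↑F : Set (Sym2 V))).Adj u v → κ u = κ v
        then ∏ v : V, (MvPolynomial.X (κ v) : MvPolynomial (Fin k) ℤ) else 0) =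
      (if ∀ e ∈ F, mono e
        then ∏ v : V, (MvPolynomial.X (κ v) : MvPolynomial (Fin k) ℤ) else 0) := by
    intro F _
    congr 1
    apply propext
    constructor
    · intro h e he
      induction e using Sym2.ind with
      | _ u v =>
        rw [hmono_mk]
        by_cases huv : u = v
        · rw [huv]
        · exact h u v ((SimpleGraph.fromEdgeSet_adj _).mpr ⟨by exact_mod_cast he, huv⟩)
    · intro h u v hadj
      rw [SimpleGraph.fromEdgeSet_adj] at hadj
      exact (hmono_mk u v).mp (h _ (by exact_mod_cast hadj.1))
  calc
    (if ∀ u v : V, G.Adj u v → κ u ≠ κ v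
        then ∏ v : V, (MvPolynomial.X (κ v) : MvPolynomial (Fin k) ℤ) else 0)
      = (if M = ∅ then 1 else 0) *
          ∏ v : V, (MvPolynomial.X (κ v) : MvPolynomial (Fin k) ℤ) := by
        have hiff : M = ∅ ↔ ∀ u v : V, G.Adj u v → κ u ≠ κ v := by
          rw [hM, Finset.filter_eq_empty_iff]
          constructor
          · intro h u v hadj hkuv
            exact h (SimpleGraph.mem_edgeFinset.mpr (G.mem_edgeSet.mpr hadj))
              ((hmono_mk u v).mpr hkuv)
          · intro h e he
            induction e using Sym2.ind with
            | _ u v =>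
              rw [hmono_mk]
              exact h u v (G.mem_edgeSet.mp (SimpleGraph.mem_edgeFinset.mp he))
        by_cases h : M = ∅
        · rw [if_pos (hiff.mp h), if_pos h, one_mul]
        · rw [if_neg (fun hp => h (hiff.mpr hp)), if_neg h, zero_mul]
    _ = (∑ F ∈ M.powerset, (-1 : MvPolynomial (Fin k) ℤ) ^ F.card) *
          ∏ v : V, (MvPolynomial.X (κ v) : MvPolynomial (Fin k) ℤ) := by
        rw [aux_sum_powerset_neg_one]
    _ = ∑ F ∈ M.powerset, (-1 : MvPolynomial (Fin k) ℤ) ^ F.card *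
          ∏ v : V, (MvPolynomial.X (κ v) : MvPolynomial (Fin k) ℤ) :=
        Finset.sum_mul _ _ _
    _ = ∑ F ∈ G.edgeFinset.powerset, (-1 : MvPolynomial (Fin k) ℤ) ^ F.card *
          (if ∀ e ∈ F, mono e
            then ∏ v : V, (MvPolynomial.X (κ v) : MvPolynomial (Fin k) ℤ) else 0) := by
        have hps : G.edgeFinset.powerset.filter (fun F => ∀ e ∈ F, mono e) = M.powerset := by
          ext F
          simp only [Finset.mem_filter, Finset.mem_powerset, hM, Finset.subset_iff,
            Finset.mem_filter]
          constructor
          · rintro ⟨h1, h2⟩ x hx; exact ⟨h1 hx, h2 x hx⟩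
          · intro h; exact ⟨fun x hx => (h hx).1, fun x hx => (h hx).2⟩
        rw [← hps, Finset.sum_filter]
        simp only [mul_ite, mul_zero]
    _ = ∑ F ∈ G.edgeFinset.powerset, (-1 : MvPolynomial (Fin k) ℤ) ^ F.card *
          (if ∀ u v : V, (SimpleGraph.fromEdgeSet (↑F : Set (Sym2 V))).Adj u v → κ u = κ v
            then ∏ v : V, (MvPolynomial.X (κ v) : MvPolynomial (Fin k) ℤ) else 0) :=
        Finset.sum_congr rfl fun F hF => by rw [key F hF]
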